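/- Let Γ act isometrically on a metric space (X,d) and let D_Γ(x,x') = inf_{γ∈Γ}(|γ| + d(γx,x')). Then the warped metric d_Γ equals D_Γ. -/

import Mathlib

open scoped BigOperators

noncomputable def wordLength {G : Type*} [Group G] (S : Set G) (g : G) : ℕ :=
  sInf {n : ℕ | ∃ f : Fin n → G, (∀ i, f i ∈ S ∨ (f i)⁻¹ ∈ S) ∧ (List.ofFn f).prod = g}

def chainSums {G : Type*} [Group G] {X : Type*} (S : Set G) (act : G → X → X)
    (d : X → X → ℝ) (x x' : X) : Set ℝ :=
  {c | ∃ (N : ℕ) (xs : Fin (N + 1) → X) (γs : Fin N → G),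
    xs 0 = x ∧ xs (Fin.last N) = x' ∧
    c = ∑ i : Fin N, ((wordLength S (γs i) : ℝ) + d (act (γs i) (xs i.castSucc)) (xs i.succ))}

noncomputable def warpDist {G : Type*} [Group G] {X : Type*} (S : Set G) (act : G → X → X)
    (d : X → X → ℝ) (x x' : X) : ℝ :=
  sInf (chainSums S act d x x')

noncomputable def DGamma {G : Type*} [Group G] {X : Type*} (S : Set G) (act : G → X → X)
    (d : X → X → ℝ) (x x' : X) : ℝ :=
  sInf {c : ℝ | ∃ γ : G, c = (wordLength S γ : ℝ) + d (act γ x) x'}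

section Aux

variable {G : Type*} [Group G] (S : Set G)

lemma wordLength_le_list (l : List G) (hl : ∀ y ∈ l, y ∈ S ∨ y⁻¹ ∈ S) :
    wordLength S l.prod ≤ l.length := by
  apply Nat.sInf_le
  refine ⟨l.get, fun i => hl _ (l.get_mem i), ?_⟩
  simp [List.ofFn_get]

lemma wordSet_nonempty (hSgen : Subgroup.closure S = ⊤) (g : G) :
    ∃ f : Fin (wordLength S g) → G,
      (∀ i, f i ∈ S ∨ (f i)⁻¹ ∈ S) ∧ (List.ofFn f).prod = g := by
  have hg : g ∈ (Subgroup.closure S).toSubmonoid := by rw [hSgen]; trivial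
  rw [Subgroup.closure_toSubmonoid] at hg
  obtain ⟨l, hl, hp⟩ := Submonoid.exists_list_of_mem_closure hg
  have hne : {n : ℕ | ∃ f : Fin n → G, (∀ i, f i ∈ S ∨ (f i)⁻¹ ∈ S) ∧
      (List.ofFn f).prod = g}.Nonempty := by
    refine ⟨l.length, l.get, fun i => ?_, by simp [List.ofFn_get, hp]⟩
    rcases hl _ (l.get_mem i) with h | h
    · exact Or.inl h
    · exact Or.inr (by simpa using h)
  exact Nat.sInf_mem hne

lemma wordLength_one : wordLength S 1 = 0 :=
  Nat.le_zero.mp (by simpa using wordLength_le_list S [] (by simp))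

lemma wordLength_mul (hSgen : Subgroup.closure S = ⊤) (g h : G) :
    wordLength S (g * h) ≤ wordLength S g + wordLength S h := by
  obtain ⟨f, hf, hfp⟩ := wordSet_nonempty S hSgen g
  obtain ⟨f', hf', hfp'⟩ := wordSet_nonempty S hSgen h
  have := wordLength_le_list S (List.ofFn f ++ List.ofFn f') (by
    intro y hy
    rcases List.mem_append.mp hy with hy | hy
    · obtain ⟨i, rfl⟩ := List.mem_ofFn.mp hy; exact hf i
    · obtain ⟨i, rfl⟩ := List.mem_ofFn.mp hy; exact hf' i)
  simpa [hfp, hfp'] using this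

end Aux

section Aux2

variable {X : Type*} [MetricSpace X] {G : Type*} [Group G]
  (S : Set G) (act : G → X → X)

lemma DGamma_set_nonempty (x x' : X) :
    {c : ℝ | ∃ γ : G, c = (wordLength S γ : ℝ) + dist (act γ x) x'}.Nonempty :=
  ⟨_, 1, rfl⟩

lemma DGamma_set_bdd (x x' : X) :
    BddBelow {c : ℝ | ∃ γ : G, c = (wordLength S γ : ℝ) + dist (act γ x) x'} := by
  refine ⟨0, fun c hc => ?_⟩
  obtain ⟨γ, rfl⟩ := hc
  positivity

lemma DGamma_nonneg (x x' : X) : 0 ≤ DGamma S act dist x x' :=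
  Real.sInf_nonneg (fun c hc => by obtain ⟨γ, rfl⟩ := hc; positivity)

lemma DGamma_self (hact1 : ∀ x : X, act 1 x = x) (x : X) :
    DGamma S act dist x x ≤ 0 := by
  have : (0:ℝ) ∈ {c : ℝ | ∃ γ : G, c = (wordLength S γ : ℝ) + dist (act γ x) x} :=
    ⟨1, by simp [wordLength_one, hact1]⟩
  exact csInf_le (DGamma_set_bdd S act x x) this

lemma DGamma_triangle (hSgen : Subgroup.closure S = ⊤)
    (hactmul : ∀ g h x, act (g * h) x = act g (act h x))
    (hiso : ∀ (γ : G) (x y : X), dist (act γ x) (act γ y) = dist x y)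
    (x y z : X) :
    DGamma S act dist x z ≤ DGamma S act dist x y + DGamma S act dist y z := by
  have key : ∀ a ∈ {c : ℝ | ∃ γ : G, c = (wordLength S γ : ℝ) + dist (act γ x) y},
      ∀ b ∈ {c : ℝ | ∃ γ : G, c = (wordLength S γ : ℝ) + dist (act γ y) z},
      DGamma S act dist x z ≤ a + b := by
    rintro _ ⟨γ, rfl⟩ _ ⟨γ', rfl⟩
    have hmem : ((wordLength S (γ' * γ) : ℝ) + dist (act (γ' * γ) x) z) ∈
        {c : ℝ | ∃ δ : G, c = (wordLength S δ : ℝ) + dist (act δ x) z} := ⟨γ' * γ, rfl⟩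
    have h1 : DGamma S act dist x z ≤
        (wordLength S (γ' * γ) : ℝ) + dist (act (γ' * γ) x) z :=
      csInf_le (DGamma_set_bdd S act x z) hmem
    have h2 : (wordLength S (γ' * γ) : ℝ) ≤ wordLength S γ' + wordLength S γ := by
      exact_mod_cast wordLength_mul S hSgen γ' γ
    have h3 : dist (act (γ' * γ) x) z ≤ dist (act γ x) y + dist (act γ' y) z := by
      calc dist (act (γ' * γ) x) z ≤ dist (act (γ' * γ) x) (act γ' y) + dist (act γ' y) z :=
            dist_triangle _ _ _
        _ = dist (act γ x) y + dist (act γ' y) z := by rw [hactmul, hiso]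
    linarith
  have h4 : ∀ b ∈ {c : ℝ | ∃ γ : G, c = (wordLength S γ : ℝ) + dist (act γ y) z},
      DGamma S act dist x z - b ≤ DGamma S act dist x y := by
    intro b hb
    refine le_csInf (DGamma_set_nonempty S act x y) (fun a ha => ?_)
    linarith [key a ha b hb]
  have h5 : DGamma S act dist x z - DGamma S act dist x y ≤ DGamma S act dist y z := by
    refine le_csInf (DGamma_set_nonempty S act y z) (fun b hb => ?_)
    linarith [h4 b hb]
  linarith

lemma DGamma_chain (hSgen : Subgroup.closure S = ⊤)
    (hact1 : ∀ x : X, act 1 x = x)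
    (hactmul : ∀ g h x, act (g * h) x = act g (act h x))
    (hiso : ∀ (γ : G) (x y : X), dist (act γ x) (act γ y) = dist x y) :
    ∀ (N : ℕ) (xs : Fin (N + 1) → X),
      DGamma S act dist (xs 0) (xs (Fin.last N)) ≤
        ∑ i : Fin N, DGamma S act dist (xs i.castSucc) (xs i.succ) := by
  intro N
  induction N with
  | zero => intro xs; simpa using DGamma_self S act hact1 (xs 0)
  | succ N ih =>
    intro xs
    have step := ih (fun i => xs i.castSucc)
    have tri := DGamma_triangle S act hSgen hactmul hiso (xs 0)
      (xs (Fin.castSucc (Fin.last N))) (xs (Fin.last (N + 1)))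
    rw [Fin.sum_univ_castSucc]
    have hterm : ∀ i : Fin N,
        DGamma S act dist (xs i.castSucc.castSucc) (xs i.succ.castSucc) =
        DGamma S act dist (xs i.castSucc.castSucc) (xs i.castSucc.succ) := by
      intro i; rw [Fin.succ_castSucc]
    calc DGamma S act dist (xs 0) (xs (Fin.last (N + 1)))
        ≤ DGamma S act dist (xs 0) (xs (Fin.castSucc (Fin.last N))) +
          DGamma S act dist (xs (Fin.castSucc (Fin.last N))) (xs (Fin.last (N + 1))) := tri
      _ ≤ (∑ i : Fin N, DGamma S act dist (xs i.castSucc.castSucc) (xs i.succ.castSucc)) +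
          DGamma S act dist (xs (Fin.castSucc (Fin.last N))) (xs (Fin.last (N + 1))) := by
            have h0 : (Fin.castSucc (0 : Fin (N+1))) = (0 : Fin (N+2)) := rfl
            exact add_le_add_left (by simpa [h0] using step)
              (DGamma S act dist (xs (Fin.last N).castSucc) (xs (Fin.last (N + 1))))
      _ = (∑ i : Fin N, DGamma S act dist (xs (Fin.castSucc i).castSucc)
            (xs (Fin.castSucc i).succ)) +
          DGamma S act dist (xs (Fin.last N).castSucc) (xs (Fin.last N).succ) := by
            rw [Finset.sum_congr rfl (fun i _ => hterm i), Fin.succ_last]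

end Aux2

/-- for an isometric action, the warped metric equals `D_Γ`. -/
theorem warped_metric_eq_one_step_of_isometric {X : Type*} [MetricSpace X] {G : Type*} [Group G]
    (S : Set G) (hSfin : S.Finite) (hSgen : Subgroup.closure S = ⊤)
    (act : G → X → X)
    (hact1 : ∀ x, act 1 x = x) (hactmul : ∀ g h x, act (g * h) x = act g (act h x))
    (hiso : ∀ (γ : G) (x y : X), dist (act γ x) (act γ y) = dist x y) :
    ∀ x x' : X, warpDist S act dist x x' = DGamma S act dist x x' := by
  intro x x'
  have hbdd : BddBelow (chainSums S act dist x x') := by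
    refine ⟨0, fun c hc => ?_⟩
    obtain ⟨N, xs, γs, _, _, rfl⟩ := hc
    exact Finset.sum_nonneg fun i _ => by positivity
  have hne : (chainSums S act dist x x').Nonempty := by
    refine ⟨(wordLength S (1:G) : ℝ) + dist (act 1 x) x', 1, ![x, x'], ![1], rfl, rfl, ?_⟩
    simp
  apply le_antisymm
  · -- warpDist ≤ DGamma : every one-step value is a chain sum
    refine le_csInf (DGamma_set_nonempty S act x x') ?_
    rintro c ⟨γ, rfl⟩
    refine csInf_le hbdd ?_
    exact ⟨1, ![x, x'], ![γ], rfl, rfl, by simp⟩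
  · -- DGamma ≤ warpDist : every chain sum is ≥ DGamma
    refine le_csInf hne ?_
    rintro c ⟨N, xs, γs, hx0, hxl, rfl⟩
    have h1 : ∀ i : Fin N, DGamma S act dist (xs i.castSucc) (xs i.succ) ≤
        (wordLength S (γs i) : ℝ) + dist (act (γs i) (xs i.castSucc)) (xs i.succ) :=
      fun i => csInf_le (DGamma_set_bdd S act _ _) ⟨γs i, rfl⟩
    calc DGamma S act dist x x' = DGamma S act dist (xs 0) (xs (Fin.last N)) := by
          rw [hx0, hxl]
      _ ≤ ∑ i : Fin N, DGamma S act dist (xs i.castSucc) (xs i.succ) :=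
          DGamma_chain S act hSgen hact1 hactmul hiso N xs
      _ ≤ _ := Finset.sum_le_sum fun i _ => h1 i
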